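/- Let S be a semicopula. If for all measurable spaces (X,𝒜), all capacities μ, all measurable f : X → [0,1], and all a ∈ [0,1] the identity I_S(μ, S(a,f)) = S(a, I_S(μ,f)) holds, then for each a ∈ (0,1) the map x ↦ S(a,x) is left-continuous on [0,1]. -/

import Mathlib

open unitInterval Set Filter Topology

instance : Fact ((0:ℝ) ≤ 1) := ⟨zero_le_one⟩

/-- A semicopula: nondecreasing in each coordinate, neutral element 1. -/
def IsSemicopula (S : I → I → I) : Prop :=
  (∀ x, S x 1 = x) ∧ (∀ x, S 1 x = x) ∧
  (∀ y, Monotone fun x => S x y) ∧ (∀ x, Monotone fun y => S x y)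

/-- A capacity: monotone set function with value 0 at ∅ and 1 at univ. -/
def IsCapacity {X : Type} [MeasurableSpace X] (μ : Set X → I) : Prop :=
  (∀ A B : Set X, MeasurableSet A → MeasurableSet B → A ⊆ B → μ A ≤ μ B) ∧
  μ (∅ : Set X) = 0 ∧ μ (univ : Set X) = 1

/-- The generalized Sugeno (seminormed fuzzy) integral. -/
noncomputable def sugeno {X : Type} [MeasurableSpace X] (S : I → I → I)
    (μ : Set X → I) (f : X → I) : I :=
  ⨆ t : I, S t (μ {x | t ≤ f x})

theorem prop_implies_leftCont (S : I → I → I) (hS : IsSemicopula S)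
    (hprop : ∀ (X : Type) [MeasurableSpace X] (μ : Set X → I) (f : X → I),
      IsCapacity μ → Measurable f → ∀ a : I,
        sugeno S μ (fun x => S a (f x)) = S a (sugeno S μ f)) :
    ∀ a : I, 0 < a → a < 1 → ∀ x : I, ContinuousWithinAt (fun y => S a y) (Iic x) x := by
  classical
  obtain ⟨hS1, hS2, hmx, hmy⟩ := hS
  have hzero : ∀ t : I, S t 0 = 0 := by
    intro t
    refine le_antisymm ?_ nonneg'
    calc S t 0 ≤ S 1 0 := hmx 0 le_one'
    _ = 0 := hS2 0
  intro a _ _ x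
  rcases eq_or_lt_of_le (nonneg' : (0:I) ≤ x) with hx | hx
  · -- x = 0 : Iic x = {x}
    have hIic : Iic x = {x} := by
      ext y
      simp only [mem_Iic, mem_singleton_iff]
      constructor
      · intro hy
        exact le_antisymm hy (hx ▸ nonneg')
      · rintro rfl; exact le_rfl
    rw [hIic]
    exact continuousWithinAt_singleton
  · -- 0 < x
    set X := {y : I // y < x} with hX
    letI : MeasurableSpace X := ⊤
    haveI : Nonempty X := ⟨⟨0, hx⟩⟩
    set μ : Set X → I := fun A => if A.Nonempty then 1 else 0 with hμ
    have hcap : IsCapacity μ := by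
      refine ⟨?_, ?_, ?_⟩
      · intro A B _ _ hAB
        by_cases h : A.Nonempty
        · simp [hμ, h, h.mono hAB]
        · simp only [hμ, if_neg h]
          exact nonneg'
      · simp [hμ]
      · simp [hμ, Set.univ_nonempty]
    have hf : Measurable (fun p : X => p.1) := measurable_from_top
    -- first integral
    have h1 : sugeno S μ (fun p : X => p.1) = x := by
      refine le_antisymm (iSup_le fun t => ?_) ?_
      · by_cases ht : t < x
        · have hne : {p : X | t ≤ p.1}.Nonempty := ⟨⟨t, ht⟩, mem_setOf.mpr le_rfl⟩
          simp only [hμ, if_pos hne, hS1]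
          exact ht.le
        · have hne : ¬ {p : X | t ≤ p.1}.Nonempty := by
            rintro ⟨p, hp⟩
            exact ht (lt_of_le_of_lt hp p.2)
          simp only [hμ, if_neg hne, hzero]
          exact nonneg'
      · refine le_of_forall_lt fun c hc => ?_
        obtain ⟨d, hcd, hdx⟩ := exists_between hc
        have hne : {p : X | d ≤ p.1}.Nonempty := ⟨⟨d, hdx⟩, mem_setOf.mpr le_rfl⟩
        calc c < d := hcd
        _ = S d (μ {p : X | d ≤ p.1}) := by simp [hμ, if_pos hne, hS1]
        _ ≤ _ := le_iSup (fun t => S t (μ {p : X | t ≤ p.1})) d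
    -- second integral
    have h2 : sugeno S μ (fun p : X => S a p.1) = sSup ((fun y => S a y) '' Iio x) := by
      refine le_antisymm (iSup_le fun t => ?_) ?_
      · by_cases ht : {p : X | t ≤ S a p.1}.Nonempty
        · obtain ⟨p, hp⟩ := ht
          have hne : {p : X | t ≤ S a p.1}.Nonempty := ⟨p, hp⟩
          simp only [hμ, if_pos hne, hS1]
          exact (mem_setOf.mp hp).trans (le_sSup ⟨p.1, p.2, rfl⟩)
        · simp only [hμ, if_neg ht, hzero]
          exact nonneg'
      · refine sSup_le ?_
        rintro _ ⟨y, hy, rfl⟩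
        have hne : {p : X | S a y ≤ S a p.1}.Nonempty := ⟨⟨y, hy⟩, mem_setOf.mpr le_rfl⟩
        calc S a y = S (S a y) (μ {p : X | S a y ≤ S a p.1}) := by
              simp [hμ, if_pos hne, hS1]
        _ ≤ _ := le_iSup (fun t => S t (μ {p : X | t ≤ S a p.1})) (S a y)
    have key : sSup ((fun y => S a y) '' Iio x) = S a x := by
      rw [← h2, hprop X μ _ hcap hf a, h1]
    have hmono : Monotone (fun y => S a y) := hmy a
    have htend := hmono.tendsto_nhdsLT x
    rw [key] at htend
    have hcw : ContinuousWithinAt (fun y => S a y) (Iio x ∪ {x}) x := by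
      rw [ContinuousWithinAt, nhdsWithin_union, nhdsWithin_singleton]
      exact htend.sup (tendsto_pure_nhds _ _)
    simpa [Iio_union_right] using hcw
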